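/- For all natural numbers m ≥ 1, the double sum over r from 0 to m and s from 0 to m of ( binom(r+s, r) · binom(2m−r−s, m−r) )^2 equals binom(4m+1, 2m). -/

import Mathlib

open Finset Nat

namespace Stmt2Aux

/-- guarded squared binomial coefficient -/
def c (r s : ℤ) : ℤ := if 0 ≤ r ∧ 0 ≤ s then (((r+s).toNat.choose r.toNat : ℤ))^2 else 0

lemma c_nonneg_eval (r s : ℕ) : c (r : ℤ) (s : ℤ) = ((r+s).choose r : ℤ)^2 := by
  simp [c]; norm_cast

lemma c_zero_of_neg {r s : ℤ} (h : r < 0 ∨ s < 0) : c r s = 0 := by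
  unfold c; rcases h with h | h <;> rw [if_neg] <;> omega

lemma c_symm (r s : ℤ) : c r s = c s r := by
  unfold c
  by_cases h : 0 ≤ r ∧ 0 ≤ s
  · rw [if_pos h, if_pos ⟨h.2, h.1⟩]
    have h1 : (r+s).toNat = r.toNat + s.toNat := by omega
    have h2 : (s+r).toNat = s.toNat + r.toNat := by omega
    rw [h1, h2, Nat.choose_symm_add, Nat.add_comm]
  · rw [if_neg h, if_neg (by tauto)]

/-- convolution of two quadrant-supported double sequences -/
noncomputable def conv (u v : ℤ → ℤ → ℤ) (a b : ℤ) : ℤ :=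
  if 0 ≤ a ∧ 0 ≤ b then ∑ r ∈ Icc (0:ℤ) a, ∑ s ∈ Icc (0:ℤ) b, u r s * v (a-r) (b-s) else 0

def Supp (u : ℤ → ℤ → ℤ) : Prop := ∀ a b : ℤ, (a < 0 ∨ b < 0) → u a b = 0

lemma conv_supp (u v : ℤ → ℤ → ℤ) : Supp (conv u v) := by
  intro a b h; unfold conv; rw [if_neg]; omega

lemma sum_Icc_reflect (f : ℤ → ℤ) (a : ℤ) :
    ∑ r ∈ Icc (0:ℤ) a, f r = ∑ r ∈ Icc (0:ℤ) a, f (a - r) := by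
  apply Finset.sum_nbij' (fun r => a - r) (fun r => a - r) <;>
    intros <;> simp_all [Finset.mem_Icc] <;> omega

lemma conv_comm (u v : ℤ → ℤ → ℤ) (a b : ℤ) : conv u v a b = conv v u a b := by
  unfold conv
  by_cases h : 0 ≤ a ∧ 0 ≤ b
  · rw [if_pos h, if_pos h]
    rw [sum_Icc_reflect]
    apply Finset.sum_congr rfl
    intro r hr
    rw [sum_Icc_reflect]
    apply Finset.sum_congr rfl
    intro s hs
    have h1 : a - (a - r) = r := by ring
    have h2 : b - (b - s) = s := by ring
    rw [h1, h2, mul_comm]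
  · rw [if_neg h, if_neg h]


lemma Icc_top_split {a : ℤ} (h : 0 ≤ a) : Icc (0:ℤ) a = insert a (Icc 0 (a-1)) := by
  ext x; simp [Finset.mem_Icc, Finset.mem_insert]; omega

lemma Icc_bot_split {a : ℤ} (h : 0 ≤ a) : Icc (0:ℤ) a = insert 0 (Icc 1 a) := by
  ext x; simp [Finset.mem_Icc, Finset.mem_insert]; omega

/-- pushing a first-coordinate shift out of the second argument of conv -/
lemma conv_shift1 (u v : ℤ → ℤ → ℤ) (hv : Supp v) (a b : ℤ) :
    conv u (fun p q => v (p-1) q) a b = conv u v (a-1) b := by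
  unfold conv
  by_cases hb : 0 ≤ b
  · by_cases ha : 1 ≤ a
    · rw [if_pos ⟨by omega, hb⟩, if_pos ⟨by omega, hb⟩]
      rw [Icc_top_split (by omega : (0:ℤ) ≤ a), Finset.sum_insert (by simp [Finset.mem_Icc])]
      have : ∀ s ∈ Icc (0:ℤ) b, u a s * v (a - a - 1) (b - s) = 0 := by
        intro s _; rw [hv _ _ (by omega)]; ring
      rw [Finset.sum_eq_zero this, zero_add]
      apply Finset.sum_congr rfl
      intro r hr
      apply Finset.sum_congr rfl
      intro s hs
      show u r s * v (a - r - 1) (b - s) = u r s * v (a - 1 - r) (b - s)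
      have : a - r - 1 = a - 1 - r := by ring
      rw [this]
    · by_cases ha0 : a = 0
      · subst ha0
        rw [if_pos ⟨le_refl 0, hb⟩, if_neg (by omega)]
        apply Finset.sum_eq_zero; intro r hr
        apply Finset.sum_eq_zero; intro s hs
        simp only [Finset.mem_Icc] at hr
        have hr0 : r = 0 := by omega
        subst hr0
        show u 0 s * v (0 - 0 - 1) (b - s) = 0
        rw [hv _ _ (by omega)]; ring
      · rw [if_neg (by omega), if_neg (by omega)]
  · rw [if_neg (by omega), if_neg (by omega)]

lemma conv_shift2 (u v : ℤ → ℤ → ℤ) (hv : Supp v) (a b : ℤ) :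
    conv u (fun p q => v p (q-1)) a b = conv u v a (b-1) := by
  unfold conv
  by_cases ha : 0 ≤ a
  · by_cases hb : 1 ≤ b
    · rw [if_pos ⟨ha, by omega⟩, if_pos ⟨ha, by omega⟩]
      apply Finset.sum_congr rfl
      intro r hr
      rw [Icc_top_split (by omega : (0:ℤ) ≤ b), Finset.sum_insert (by simp [Finset.mem_Icc])]
      have : u r b * v (a - r) (b - b - 1) = 0 := by
        rw [hv _ _ (by omega)]; ring
      rw [this, zero_add]
      apply Finset.sum_congr rfl
      intro s hs
      show u r s * v (a - r) (b - s - 1) = u r s * v (a - r) (b - 1 - s)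
      have : b - s - 1 = b - 1 - s := by ring
      rw [this]
    · by_cases hb0 : b = 0
      · subst hb0
        rw [if_pos ⟨ha, le_refl 0⟩, if_neg (by omega)]
        apply Finset.sum_eq_zero; intro r hr
        apply Finset.sum_eq_zero; intro s hs
        simp only [Finset.mem_Icc] at hs
        have hs0 : s = 0 := by omega
        subst hs0
        show u r 0 * v (a - r) (0 - 0 - 1) = 0
        rw [hv _ _ (by omega)]; ring
      · rw [if_neg (by omega), if_neg (by omega)]
  · rw [if_neg (by omega), if_neg (by omega)]

/-- product rule for the x-derivative -/
lemma conv_Dx (u v : ℤ → ℤ → ℤ) (a b : ℤ) (ha : 0 ≤ a) (hb : 0 ≤ b) :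
    (a+1) * conv u v (a+1) b
      = conv (fun p q => (p+1) * u (p+1) q) v a b
        + conv u (fun p q => (p+1) * v (p+1) q) a b := by
  unfold conv
  rw [if_pos ⟨by omega, hb⟩, if_pos ⟨ha, hb⟩, if_pos ⟨ha, hb⟩]
  rw [Finset.mul_sum]
  have key : ∀ r ∈ Icc (0:ℤ) (a+1),
      (a+1) * ∑ s ∈ Icc (0:ℤ) b, u r s * v (a+1-r) (b-s)
      = (∑ s ∈ Icc (0:ℤ) b, r * u r s * v (a+1-r) (b-s))
        + ∑ s ∈ Icc (0:ℤ) b, u r s * ((a+1-r) * v (a+1-r) (b-s)) := by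
    intro r _
    rw [Finset.mul_sum, ← Finset.sum_add_distrib]
    apply Finset.sum_congr rfl
    intro s _
    ring
  rw [Finset.sum_congr rfl key, Finset.sum_add_distrib]
  congr 1
  · -- first piece: drop r = 0, reindex r ↦ r+1
    rw [Icc_bot_split (by omega : (0:ℤ) ≤ a+1), Finset.sum_insert (by simp [Finset.mem_Icc])]
    rw [Finset.sum_eq_zero (fun s _ => by ring), zero_add]
    refine Finset.sum_nbij' (fun r => r - 1) (fun r => r + 1) ?_ ?_ ?_ ?_ ?_
    · intro x hx; simp only [Finset.mem_Icc] at *; omega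
    · intro x hx; simp only [Finset.mem_Icc] at *; omega
    · intro x hx; show x - 1 + 1 = x; omega
    · intro x hx; show x + 1 - 1 = x; omega
    · intro x hx
      simp only [Finset.mem_Icc] at hx
      apply Finset.sum_congr rfl
      intro s _
      show x * u x s * v (a + 1 - x) (b - s)
          = (x - 1 + 1) * u (x - 1 + 1) s * v (a - (x - 1)) (b - s)
      have h1 : x - 1 + 1 = x := by ring
      have h2 : a - (x-1) = a + 1 - x := by ring
      rw [h1, h2]
  · -- second piece: drop r = a+1
    rw [Icc_top_split (by omega : (0:ℤ) ≤ a+1)]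
    rw [Finset.sum_insert (by simp [Finset.mem_Icc])]
    rw [Finset.sum_eq_zero (fun s _ => by rw [(by ring : a+1-(a+1) = (0:ℤ))]; ring), zero_add]
    have : a + 1 - 1 = a := by ring
    rw [this]
    apply Finset.sum_congr rfl
    intro r hr
    apply Finset.sum_congr rfl
    intro s _
    show u r s * ((a + 1 - r) * v (a + 1 - r) (b - s))
        = u r s * ((a - r + 1) * v (a - r + 1) (b - s))
    have : a + 1 - r = a - r + 1 := by ring
    rw [this]


lemma Zgen (A B : ℕ) :
    (2*(A:ℚ)+4) * (((A+2)+(B+2)).choose (A+2) : ℚ)^2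
    - (4*A+6) * (((A+1)+(B+2)).choose (A+1) : ℚ)^2
    - (4*A+8) * (((A+2)+(B+1)).choose (A+2) : ℚ)^2
    - (4*A+6) * (((A+1)+(B+1)).choose (A+1) : ℚ)^2
    + (2*A+2) * ((A+(B+2)).choose A : ℚ)^2
    + (2*A+4) * (((A+2)+B).choose (A+2) : ℚ)^2 = 0 := by
  simp only [Nat.cast_add_choose]
  have e1 : ((A+2)+(B+2))! = ((A+B+4):ℕ)! := by ring_nf
  have e2 : ((A+1)+(B+2))! = ((A+B+3):ℕ)! := by ring_nf
  have e3 : ((A+2)+(B+1))! = ((A+B+3):ℕ)! := by ring_nf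
  have e4 : ((A+1)+(B+1))! = ((A+B+2):ℕ)! := by ring_nf
  have e5 : (A+(B+2))! = ((A+B+2):ℕ)! := by ring_nf
  have e6 : ((A+2)+B)! = ((A+B+2):ℕ)! := by ring_nf
  rw [e1, e2, e3, e4, e5, e6]
  have f1 : ((A+B+4):ℕ)! = (A+B+4)*((A+B+3)*((A+B+2))!) := by
    rw [show A+B+4 = (A+B+3)+1 from rfl, Nat.factorial_succ,
        show A+B+3 = (A+B+2)+1 from rfl, Nat.factorial_succ]
  have f2 : ((A+B+3):ℕ)! = (A+B+3)*((A+B+2))! := by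
    rw [show A+B+3 = (A+B+2)+1 from rfl, Nat.factorial_succ]
  have g1 : (A+2)! = (A+2)*((A+1)*(A)!) := by
    rw [show A+2 = (A+1)+1 from rfl, Nat.factorial_succ, Nat.factorial_succ]
  have g2 : (A+1)! = (A+1)*(A)! := Nat.factorial_succ A
  have h1 : (B+2)! = (B+2)*((B+1)*(B)!) := by
    rw [show B+2 = (B+1)+1 from rfl, Nat.factorial_succ, Nat.factorial_succ]
  have h2 : (B+1)! = (B+1)*(B)! := Nat.factorial_succ B
  rw [f1, f2, g1, g2, h1, h2]
  push_cast
  have nz1' : (((A+B+2):ℕ)! : ℚ) ≠ 0 := by exact_mod_cast Nat.factorial_ne_zero _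
  have nz2' : ((A:ℕ)! : ℚ) ≠ 0 := by exact_mod_cast Nat.factorial_ne_zero _
  have nz3' : ((B:ℕ)! : ℚ) ≠ 0 := by exact_mod_cast Nat.factorial_ne_zero _
  have pA : ((A:ℚ)+1) ≠ 0 := by positivity
  have pA2 : ((A:ℚ)+2) ≠ 0 := by positivity
  have pB : ((B:ℚ)+1) ≠ 0 := by positivity
  have pB2 : ((B:ℚ)+2) ≠ 0 := by positivity
  field_simp
  ring

/-- The certificate identity: `2·P(∂ₓ f) + Pₓ·f = 0` at the coefficient level. -/
lemma Zfun_eq_zero (a b : ℤ) :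
    2*(a+1) * c (a+1) b - (4*a+2) * c a b - 4*(a+1) * c (a+1) (b-1)
    - (4*a+2) * c a (b-1) + 2*a * c (a-1) b + 2*(a+1) * c (a+1) (b-2) = 0 := by
  rcases lt_or_ge a 0 with ha | ha
  · -- a < 0
    rw [c_zero_of_neg (Or.inl ha), c_zero_of_neg (Or.inl (by omega : a - 1 < 0)),
        c_zero_of_neg (Or.inl ha)]
    rcases eq_or_lt_of_le (by omega : a ≤ -1) with h1 | h1
    · subst h1; norm_num
    · rw [c_zero_of_neg (Or.inl (by omega : a + 1 < 0)),
          c_zero_of_neg (Or.inl (by omega : a + 1 < 0)),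
          c_zero_of_neg (Or.inl (by omega : a + 1 < 0))]
      ring
  rcases lt_or_ge b 0 with hb | hb
  · rw [c_zero_of_neg (Or.inr hb), c_zero_of_neg (Or.inr hb),
        c_zero_of_neg (Or.inr (by omega : b - 1 < 0)),
        c_zero_of_neg (Or.inr (by omega : b - 1 < 0)),
        c_zero_of_neg (Or.inr hb), c_zero_of_neg (Or.inr (by omega : b - 2 < 0))]
    ring
  -- now 0 ≤ a, 0 ≤ b
  lift a to ℕ using ha with A
  lift b to ℕ using hb with B
  have ceval : ∀ r s : ℕ, c (r : ℤ) (s : ℤ) = ((r+s).choose r : ℤ)^2 := c_nonneg_eval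
  rcases A with _ | A
  · -- a = 0
    push_cast
    rcases B with _ | B
    · -- (0,0)
      push_cast
      have h1 := ceval 1 0
      have h0 := ceval 0 0
      push_cast at h1 h0
      rw [c_zero_of_neg (Or.inr (by norm_num : (-1:ℤ) < 0)),
          c_zero_of_neg (Or.inr (by norm_num : (-1:ℤ) < 0)),
          c_zero_of_neg (Or.inr (by norm_num : (-2:ℤ) < 0)), h1, h0]
      norm_num
    · rcases B with _ | B
      · -- (0,1)
        push_cast
        have h1 := ceval 1 1
        have h2 := ceval 0 1
        have h3 := ceval 1 0
        have h4 := ceval 0 0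
        push_cast at h1 h2 h3 h4
        rw [c_zero_of_neg (Or.inr (by norm_num : (-1:ℤ) < 0)), h1, h2, h3, h4]
        norm_num [Nat.choose]
      · -- (0, B+2)
        push_cast
        have h1 := ceval 1 (B+2)
        have h2 := ceval 0 (B+2)
        have h3 := ceval 1 (B+1)
        have h4 := ceval 0 (B+1)
        have h5 := ceval 1 B
        push_cast at h1 h2 h3 h4 h5
        rw [show ((B:ℤ) + 1 + 1 - 1) = (B:ℤ) + 1 by ring,
            show ((B:ℤ) + 1 + 1 - 2) = (B:ℤ) by ring,
            show ((B:ℤ) + 1 + 1) = (B:ℤ) + 2 by ring]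
        rw [h1, h2, h3, h4, h5]
        simp only [Nat.choose_zero_right, Nat.zero_add, Nat.choose_one_right,
          show ∀ k : ℕ, 1 + k = k + 1 from fun k => by omega]
        push_cast
        ring
  · rcases B with _ | B
    · -- (A+1, 0)
      have h1 := ceval (A+2) 0
      have h2 := ceval (A+1) 0
      have h3 := ceval A 0
      push_cast at h1 h2 h3 ⊢
      rw [c_zero_of_neg (Or.inr (by norm_num : (-1:ℤ) < 0)),
          c_zero_of_neg (Or.inr (by norm_num : (-1:ℤ) < 0)),
          c_zero_of_neg (Or.inr (by norm_num : (-2:ℤ) < 0)),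
          show ((A:ℤ) + 1 - 1) = (A:ℤ) by ring,
          show ((A:ℤ) + 1 + 1) = (A:ℤ) + 2 by ring, h1, h2, h3]
      simp only [Nat.add_zero, Nat.choose_self]
      push_cast
      ring
    · rcases B with _ | B
      · -- (A+1, 1)
        have h1 := ceval (A+2) 1
        have h2 := ceval (A+1) 1
        have h3 := ceval (A+2) 0
        have h4 := ceval (A+1) 0
        have h5 := ceval A 1
        push_cast at h1 h2 h3 h4 h5 ⊢
        rw [show ((A:ℤ) + 1 - 1) = (A:ℤ) by ring,
            show ((A:ℤ) + 1 + 1) = (A:ℤ) + 2 by ring,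
            c_zero_of_neg (Or.inr (by norm_num : (-1:ℤ) < 0)), h1, h2, h3, h4, h5]
        have e1 : (A+2+1).choose (A+2) = A+3 := by
          rw [show A+2+1 = (A+2)+1 from rfl, Nat.choose_succ_self_right]
        have e2 : (A+1+1).choose (A+1) = A+2 := by
          rw [show A+1+1 = (A+1)+1 from rfl, Nat.choose_succ_self_right]
        have e3 : (A+1).choose A = A+1 := Nat.choose_succ_self_right A
        simp only [Nat.add_zero, Nat.choose_self, e1, e2, e3]
        push_cast
        ring
      · -- (A+1, B+2): generic case
        have h1 := ceval (A+2) (B+2)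
        have h2 := ceval (A+1) (B+2)
        have h3 := ceval (A+2) (B+1)
        have h4 := ceval (A+1) (B+1)
        have h5 := ceval A (B+2)
        have h6 := ceval (A+2) B
        push_cast at h1 h2 h3 h4 h5 h6 ⊢
        rw [show ((B:ℤ) + 1 + 1 - 1) = (B:ℤ) + 1 by ring,
            show ((B:ℤ) + 1 + 1 - 2) = (B:ℤ) by ring,
            show ((B:ℤ) + 1 + 1) = (B:ℤ) + 2 by ring,
            show ((A:ℤ) + 1 + 1) = (A:ℤ) + 2 by ring,
            show ((A:ℤ) + 1 - 1) = (A:ℤ) by ring]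
        rw [h1, h2, h3, h4, h5, h6]
        qify
        linear_combination Zgen A B


def S1 (u : ℤ → ℤ → ℤ) : ℤ → ℤ → ℤ := fun p q => u (p-1) q
def S2 (u : ℤ → ℤ → ℤ) : ℤ → ℤ → ℤ := fun p q => u p (q-1)
def Dc : ℤ → ℤ → ℤ := fun p q => (p+1) * c (p+1) q
def W : ℤ → ℤ → ℤ := fun p q =>
  2 * Dc p q + (-4) * S1 Dc p q + (-4) * S2 Dc p q + (-4) * S1 (S2 Dc) p q
  + 2 * S1 (S1 Dc) p q + 2 * S2 (S2 Dc) p q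
  + (-2) * c p q + (-2) * S2 c p q + 2 * S1 c p q

lemma supp_c : Supp c := fun a b h => c_zero_of_neg h

lemma supp_Dc : Supp Dc := by
  intro a b h
  unfold Dc
  rcases h with h | h
  · rcases eq_or_lt_of_le (by omega : a ≤ -1) with h1 | h1
    · subst h1; ring
    · rw [c_zero_of_neg (Or.inl (by omega))]; ring
  · rw [c_zero_of_neg (Or.inr h)]; ring

lemma supp_S1 {u : ℤ → ℤ → ℤ} (h : Supp u) : Supp (S1 u) := by
  intro a b hab; unfold S1; apply h; omega

lemma supp_S2 {u : ℤ → ℤ → ℤ} (h : Supp u) : Supp (S2 u) := by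
  intro a b hab; unfold S2; apply h; omega

lemma conv_eq_zero_of_right_zero (u v : ℤ → ℤ → ℤ) (hv : ∀ p q, v p q = 0) (a b : ℤ) :
    conv u v a b = 0 := by
  unfold conv
  split_ifs with h
  · apply Finset.sum_eq_zero; intro r _; apply Finset.sum_eq_zero; intro s _
    rw [hv]; ring
  · rfl

lemma convW_eq (a b : ℤ) :
    conv c W a b
    = 2 * conv c Dc a b + (-4) * conv c (S1 Dc) a b + (-4) * conv c (S2 Dc) a b
      + (-4) * conv c (S1 (S2 Dc)) a b + 2 * conv c (S1 (S1 Dc)) a b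
      + 2 * conv c (S2 (S2 Dc)) a b + (-2) * conv c c a b + (-2) * conv c (S2 c) a b
      + 2 * conv c (S1 c) a b := by
  unfold conv
  split_ifs with h
  · simp only [Finset.mul_sum, ← Finset.sum_add_distrib]
    apply Finset.sum_congr rfl; intro r _
    apply Finset.sum_congr rfl; intro s _
    unfold W; ring
  · ring


def Ch (n k : ℤ) : ℤ := if 0 ≤ k ∧ k ≤ n then ((n.toNat).choose k.toNat : ℤ) else 0

lemma Ch_pascal (n k : ℤ) (hn : 1 ≤ n) : Ch n k = Ch (n-1) (k-1) + Ch (n-1) k := by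
  unfold Ch
  rcases lt_or_ge k 0 with hk | hk
  · rw [if_neg (by omega), if_neg (by omega), if_neg (by omega)]; ring
  rcases eq_or_lt_of_le hk with hk0 | hk1
  · rw [← hk0]
    rw [if_pos (by omega), if_neg (by omega), if_pos (by omega)]
    simp
  rcases lt_or_ge n k with hnk | hnk
  · rw [if_neg (by omega), if_neg (by omega), if_neg (by omega)]; ring
  -- 1 ≤ k ≤ n
  rw [if_pos (by omega), if_pos (by omega)]
  have e1 : n.toNat = (n-1).toNat + 1 := by omega
  have e2 : k.toNat = (k-1).toNat + 1 := by omega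
  rw [e1, e2, Nat.choose_succ_succ]
  rcases lt_or_ge (n-1) k with h | h
  · -- k = n
    rw [if_neg (by omega)]
    have : (n-1).toNat < (k-1).toNat + 1 := by omega
    rw [Nat.choose_eq_zero_of_lt this]
    push_cast; ring
  · rw [if_pos (by omega)]
    simp only [Nat.succ_eq_add_one, e2]
    push_cast; ring

lemma pascal4 (n k : ℤ) (hn : 4 ≤ n) :
    Ch n k = 2 * Ch (n-2) (k-2) + 2 * Ch (n-2) k + 2 * Ch (n-4) (k-2)
      - Ch (n-4) (k-4) - Ch (n-4) k := by
  have p1 := Ch_pascal n k (by omega)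
  have p2 := Ch_pascal (n-1) (k-1) (by omega)
  have p3 := Ch_pascal (n-1) k (by omega)
  have p4 := Ch_pascal (n-2) (k-2) (by omega)
  have p5 := Ch_pascal (n-2) (k-1) (by omega)
  have p6 := Ch_pascal (n-2) k (by omega)
  have p7 := Ch_pascal (n-3) (k-3) (by omega)
  have p8 := Ch_pascal (n-3) (k-2) (by omega)
  have p9 := Ch_pascal (n-3) (k-1) (by omega)
  have p10 := Ch_pascal (n-3) k (by omega)
  rw [show n-1-1 = n-2 by ring] at p2 p3
  rw [show n-2-1 = n-3 by ring] at p4 p5 p6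
  rw [show n-3-1 = n-4 by ring] at p7 p8 p9 p10
  rw [show k-1-1 = k-2 by ring] at p2 p5 p9
  rw [show k-2-1 = k-3 by ring] at p4 p8
  rw [show k-3-1 = k-4 by ring] at p7
  linear_combination p1 + p2 + p3 - p4 + 2*p5 - p6 - p7 + p8 + p9 - p10

def H (a b : ℤ) : ℤ := Ch (2*a+2*b+2) (2*a+1)

lemma H_supp : ∀ a b : ℤ, (a < 0 ∨ b < 0) → H a b = 0 := by
  intro a b h
  unfold H Ch
  rcases h with h | h <;> rw [if_neg (by omega)]

def Pop (u : ℤ → ℤ → ℤ) : ℤ → ℤ → ℤ := fun a b =>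
  u a b - 2 * u (a-1) b - 2 * u a (b-1) - 2 * u (a-1) (b-1) + u (a-2) b + u a (b-2)

lemma PopH (a b : ℤ) (ha : 0 ≤ a) (hb : 0 ≤ b) (h : ¬(a = 0 ∧ b = 0)) : Pop H a b = 0 := by
  unfold Pop H
  have h4 := pascal4 (2*a+2*b+2) (2*a+1) (by omega)
  rw [show 2*(a-1)+2*b+2 = (2*a+2*b+2)-2 by ring, show 2*(a-1)+1 = (2*a+1)-2 by ring,
      show 2*a+2*(b-1)+2 = (2*a+2*b+2)-2 by ring,
      show 2*(a-1)+2*(b-1)+2 = (2*a+2*b+2)-4 by ring,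
      show 2*(a-2)+2*b+2 = (2*a+2*b+2)-4 by ring,
      show 2*(a-2)+1 = (2*a+1)-4 by ring,
      show 2*a+2*(b-2)+2 = (2*a+2*b+2)-4 by ring]
  linear_combination h4

lemma PopH00 : Pop H 0 0 = 2 := by
  unfold Pop
  rw [show (0:ℤ)-1 = -1 by ring, show (0:ℤ)-2 = -2 by ring]
  rw [H_supp (-1) 0 (by norm_num), H_supp 0 (-1) (by norm_num),
      H_supp (-1) (-1) (by norm_num), H_supp (-2) 0 (by norm_num),
      H_supp 0 (-2) (by norm_num)]
  unfold H Ch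
  norm_num


lemma conv_S1 (u v : ℤ → ℤ → ℤ) (hv : Supp v) (a b : ℤ) :
    conv u (S1 v) a b = conv u v (a-1) b := conv_shift1 u v hv a b

lemma conv_S2 (u v : ℤ → ℤ → ℤ) (hv : Supp v) (a b : ℤ) :
    conv u (S2 v) a b = conv u v a (b-1) := conv_shift2 u v hv a b

lemma W_eq_zero (p q : ℤ) : W p q = 0 := by
  have hz := Zfun_eq_zero p q
  unfold W S1 S2 Dc
  rw [show p-1+1 = p by ring, show p-1-1+1 = p-1 by ring, show q-1-1 = q-2 by ring]
  linear_combination hz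

lemma convW_zero (a b : ℤ) : conv c W a b = 0 :=
  conv_eq_zero_of_right_zero c W W_eq_zero a b

lemma stepA (a b : ℤ) :
    (a+1) * conv c c (a+1) b = conv Dc c a b + conv c Dc a b := by
  by_cases h : 0 ≤ a ∧ 0 ≤ b
  · have hd := conv_Dx c c a b h.1 h.2
    unfold Dc
    exact hd
  · have hl : conv Dc c a b = 0 := by unfold conv; rw [if_neg h]
    have hr : conv c Dc a b = 0 := by unfold conv; rw [if_neg h]
    rw [hl, hr]
    rcases not_and_or.mp h with h1 | h1
    · push_neg at h1
      rcases eq_or_lt_of_le (by omega : a ≤ -1) with h2 | h2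
      · subst h2; ring
      · rw [conv_supp c c (a+1) b (Or.inl (by omega))]; ring
    · push_neg at h1
      rw [conv_supp c c (a+1) b (Or.inr (by omega))]; ring

lemma keyG (a b : ℤ) :
    (a+1) * (conv c c (a+1) b - 2 * conv c c a b - 2 * conv c c (a+1) (b-1)
      - 2 * conv c c a (b-1) + conv c c (a-1) b + conv c c (a+1) (b-2)) = 0 := by
  have e1 := stepA a b
  have e2 := stepA (a-1) b
  have e3 := stepA a (b-1)
  have e4 := stepA (a-1) (b-1)
  have e5 := stepA (a-2) b
  have e6 := stepA a (b-2)
  rw [show a-1+1 = a by ring] at e2 e4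
  rw [show a-2+1 = a-1 by ring] at e5
  have cm1 := conv_comm Dc c a b
  have cm2 := conv_comm Dc c (a-1) b
  have cm3 := conv_comm Dc c a (b-1)
  have cm4 := conv_comm Dc c (a-1) (b-1)
  have cm5 := conv_comm Dc c (a-2) b
  have cm6 := conv_comm Dc c a (b-2)
  have sh1 := conv_S1 c Dc supp_Dc a b
  have sh2 := conv_S2 c Dc supp_Dc a b
  have sh12 : conv c (S1 (S2 Dc)) a b = conv c Dc (a-1) (b-1) := by
    rw [conv_S1 c (S2 Dc) (supp_S2 supp_Dc) a b, conv_S2 c Dc supp_Dc (a-1) b]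
  have sh11 : conv c (S1 (S1 Dc)) a b = conv c Dc (a-2) b := by
    rw [conv_S1 c (S1 Dc) (supp_S1 supp_Dc) a b, conv_S1 c Dc supp_Dc (a-1) b]
    norm_num
    rw [show a-1-1 = a-2 by ring]
  have sh22 : conv c (S2 (S2 Dc)) a b = conv c Dc a (b-2) := by
    rw [conv_S2 c (S2 Dc) (supp_S2 supp_Dc) a b, conv_S2 c Dc supp_Dc a (b-1)]
    rw [show b-1-1 = b-2 by ring]
  have shc1 := conv_S1 c c supp_c a b
  have shc2 := conv_S2 c c supp_c a b
  have cw := convW_eq a b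
  have cz := convW_zero a b
  linear_combination e1 - 2*e2 - 2*e3 - 2*e4 + e5 + e6
    + cm1 - 2*cm2 - 2*cm3 - 2*cm4 + cm5 + cm6
    + cz - cw
    + 4*sh1 + 4*sh2 + 4*sh12 - 2*sh11 - 2*sh22 + 2*shc2 - 2*shc1

lemma conv_cc_symm (a b : ℤ) : conv c c a b = conv c c b a := by
  unfold conv
  by_cases h : 0 ≤ a ∧ 0 ≤ b
  · rw [if_pos h, if_pos ⟨h.2, h.1⟩, Finset.sum_comm]
    apply Finset.sum_congr rfl
    intro x _
    apply Finset.sum_congr rfl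
    intro y _
    rw [c_symm y x, c_symm (a-y) (b-x)]
  · rw [if_neg h, if_neg (by tauto)]

lemma PopG (a b : ℤ) (h : ¬(a = 0 ∧ b = 0)) : Pop (conv c c) a b = 0 := by
  rcases lt_or_ge a 0 with ha | ha
  · unfold Pop
    rw [conv_supp c c a b (Or.inl ha), conv_supp c c (a-1) b (Or.inl (by omega)),
        conv_supp c c a (b-1) (Or.inl ha), conv_supp c c (a-1) (b-1) (Or.inl (by omega)),
        conv_supp c c (a-2) b (Or.inl (by omega)), conv_supp c c a (b-2) (Or.inl ha)]
    ring
  rcases lt_or_ge b 0 with hb | hb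
  · unfold Pop
    rw [conv_supp c c a b (Or.inr hb), conv_supp c c (a-1) b (Or.inr hb),
        conv_supp c c a (b-1) (Or.inr (by omega)), conv_supp c c (a-1) (b-1) (Or.inr (by omega)),
        conv_supp c c (a-2) b (Or.inr hb), conv_supp c c a (b-2) (Or.inr (by omega))]
    ring
  rcases lt_or_ge 0 a with ha1 | ha1
  · -- 1 ≤ a
    have hk := keyG (a-1) b
    rw [show a-1+1 = a by ring, show a-1-1 = a-2 by ring] at hk
    have hne : a - 1 + 1 ≠ 0 := by omega
    rw [show a-1+1 = a by ring] at hne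
    have := mul_eq_zero.mp hk
    rcases this with h1 | h1
    · exact absurd (by linarith : a = 0) (by omega)
    · unfold Pop; linear_combination h1
  -- a = 0, so b ≥ 1
  have ha0 : a = 0 := by omega
  subst ha0
  have hb1 : 1 ≤ b := by omega
  have hk := keyG (b-1) 0
  rw [show b-1+1 = b by ring, show b-1-1 = b-2 by ring] at hk
  rcases mul_eq_zero.mp hk with h1 | h1
  · exact absurd h1 (by omega)
  · unfold Pop
    rw [show (0:ℤ)-1 = -1 by ring, show (0:ℤ)-2 = -2 by ring] at h1 ⊢
    rw [conv_cc_symm 0 b, conv_cc_symm (-1) b, conv_cc_symm 0 (b-1),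
        conv_cc_symm (-1) (b-1), conv_cc_symm (-2) b, conv_cc_symm 0 (b-2)]
    rw [conv_supp c c b (-1) (Or.inr (by omega)), conv_supp c c (b-1) (-1) (Or.inr (by omega)),
        conv_supp c c b (-2) (Or.inr (by omega))] at h1 ⊢
    linear_combination h1

lemma G00 : conv c c 0 0 = 1 := by
  unfold conv
  rw [if_pos ⟨le_refl 0, le_refl 0⟩, Finset.Icc_self, Finset.sum_singleton,
      Finset.sum_singleton]
  show c 0 0 * c (0-0) (0-0) = 1
  norm_num
  unfold c
  norm_num

lemma PopG00 : Pop (conv c c) 0 0 = 1 := by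
  unfold Pop
  rw [show (0:ℤ)-1 = -1 by ring, show (0:ℤ)-2 = -2 by ring]
  rw [conv_supp c c (-1) 0 (Or.inl (by omega)), conv_supp c c 0 (-1) (Or.inr (by omega)),
      conv_supp c c (-1) (-1) (Or.inl (by omega)), conv_supp c c (-2) 0 (Or.inl (by omega)),
      conv_supp c c 0 (-2) (Or.inr (by omega)), G00]
  ring

lemma H00 : H 0 0 = 2 := by
  unfold H Ch
  norm_num

/-- difference function vanishes: `H = 2 G` on the quadrant -/
lemma H_eq_two_G : ∀ n : ℕ, ∀ a b : ℤ, 0 ≤ a → 0 ≤ b → a + b = (n:ℤ) →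
    H a b = 2 * conv c c a b := by
  intro n
  induction n using Nat.strong_induction_on with
  | _ n ih =>
    intro a b ha hb hab
    have ih' : ∀ x y : ℤ, 0 ≤ x → 0 ≤ y → x + y < (n:ℤ) →
        H x y = 2 * conv c c x y := by
      intro x y hx hy hlt
      exact ih (x+y).toNat (by omega) x y hx hy (by omega)
    have wz : ∀ x y : ℤ, x < 0 ∨ y < 0 → H x y - 2 * conv c c x y = 0 := by
      intro x y hxy
      rw [H_supp x y hxy, conv_supp c c x y hxy]; ring
    by_cases h00 : a = 0 ∧ b = 0
    · rw [h00.1, h00.2, H00, G00]; norm_num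
    · have hpg := PopG a b h00
      have hph := PopH a b ha hb h00
      unfold Pop at hpg hph
      have w1 : H (a-1) b - 2 * conv c c (a-1) b = 0 := by
        rcases lt_or_ge (a-1) 0 with h | h
        · exact wz _ _ (Or.inl h)
        · rw [ih' (a-1) b h hb (by omega)]; ring
      have w2 : H a (b-1) - 2 * conv c c a (b-1) = 0 := by
        rcases lt_or_ge (b-1) 0 with h | h
        · exact wz _ _ (Or.inr h)
        · rw [ih' a (b-1) ha h (by omega)]; ring
      have w3 : H (a-1) (b-1) - 2 * conv c c (a-1) (b-1) = 0 := by
        rcases lt_or_ge (a-1) 0 with h | h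
        · exact wz _ _ (Or.inl h)
        · rcases lt_or_ge (b-1) 0 with h2 | h2
          · exact wz _ _ (Or.inr h2)
          · rw [ih' (a-1) (b-1) h h2 (by omega)]; ring
      have w4 : H (a-2) b - 2 * conv c c (a-2) b = 0 := by
        rcases lt_or_ge (a-2) 0 with h | h
        · exact wz _ _ (Or.inl h)
        · rw [ih' (a-2) b h hb (by omega)]; ring
      have w5 : H a (b-2) - 2 * conv c c a (b-2) = 0 := by
        rcases lt_or_ge (b-2) 0 with h | h
        · exact wz _ _ (Or.inr h)
        · rw [ih' a (b-2) ha h (by omega)]; ring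
      linear_combination hph - 2*hpg + 2*w1 + 2*w2 + 2*w3 - w4 - w5

lemma sum_Icc_range (n : ℕ) (f : ℤ → ℤ) :
    ∑ r ∈ Icc (0:ℤ) (n:ℤ), f r = ∑ r ∈ range (n+1), f (r:ℤ) := by
  refine Finset.sum_nbij' (fun x => x.toNat) (fun x => (x:ℤ)) ?_ ?_ ?_ ?_ ?_ <;>
    intro x hx <;> simp_all [Finset.mem_Icc, Finset.mem_range] <;> omega

lemma conv_cc_eval (m : ℕ) :
    conv c c (m:ℤ) (m:ℤ)
      = ((∑ r ∈ range (m+1), ∑ s ∈ range (m+1),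
          ((r + s).choose r * (2 * m - r - s).choose (m - r)) ^ 2 : ℕ) : ℤ) := by
  unfold conv
  rw [if_pos ⟨by positivity, by positivity⟩]
  rw [sum_Icc_range m]
  push_cast
  apply Finset.sum_congr rfl
  intro r hr
  rw [sum_Icc_range m]
  push_cast
  apply Finset.sum_congr rfl
  intro s hs
  simp only [Finset.mem_range] at hr hs
  have hrm : r ≤ m := by omega
  have hsm : s ≤ m := by omega
  have e1 : ((m:ℤ) - r) = ((m - r : ℕ) : ℤ) := by push_cast; omega
  have e2 : ((m:ℤ) - s) = ((m - s : ℕ) : ℤ) := by push_cast; omega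
  rw [e1, e2, c_nonneg_eval r s, c_nonneg_eval (m-r) (m-s)]
  have e3 : (m - r) + (m - s) = 2 * m - r - s := by omega
  rw [e3]
  push_cast
  ring

end Stmt2Aux

theorem stmt_2 (m : ℕ) (hm : 1 ≤ m) :
    ∑ r ∈ Finset.range (m + 1), ∑ s ∈ Finset.range (m + 1),
      ((r + s).choose r * (2 * m - r - s).choose (m - r)) ^ 2
      = (4 * m + 1).choose (2 * m) := by
  have h := Stmt2Aux.H_eq_two_G (2*m) (m:ℤ) (m:ℤ) (by positivity) (by positivity)
    (by push_cast; ring)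
  rw [Stmt2Aux.conv_cc_eval m] at h
  have hH : Stmt2Aux.H (m:ℤ) (m:ℤ) = ((4*m+2).choose (2*m+1) : ℤ) := by
    unfold Stmt2Aux.H Stmt2Aux.Ch
    rw [if_pos ⟨by positivity, by push_cast; omega⟩]
    have e1 : ((2*(m:ℤ)+2*(m:ℤ)+2).toNat) = 4*m+2 := by omega
    have e2 : ((2*(m:ℤ)+1).toNat) = 2*m+1 := by omega
    rw [e1, e2]
  rw [hH] at h
  have hnat : (4*m+2).choose (2*m+1) = 2 * (4*m+1).choose (2*m) := by
    have p : (4*m+2).choose (2*m+1) = (4*m+1).choose (2*m) + (4*m+1).choose (2*m+1) := by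
      rw [show 4*m+2 = (4*m+1)+1 by omega]
      exact Nat.choose_succ_succ (4*m+1) (2*m)
    have s : (4*m+1).choose (2*m+1) = (4*m+1).choose (2*m) := by
      rw [show 4*m+1 = (2*m+1)+(2*m) by omega]
      rw [Nat.choose_symm_add]
    omega
  rw [hnat] at h
  push_cast at h
  have : ((∑ r ∈ Finset.range (m + 1), ∑ s ∈ Finset.range (m + 1),
      ((r + s).choose r * (2 * m - r - s).choose (m - r)) ^ 2 : ℕ) : ℤ)
      = (((4 * m + 1).choose (2 * m) : ℕ) : ℤ) := by
    push_cast
    linarith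
  exact_mod_cast this
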